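/- Let h : Fin n → Fin n → Fin n → Fin n → ℝ be a four-index array that is fully symmetric in its first three indices (i.e., invariant under all permutations of i, j, k in h i j k l). Then (1/16) * ∑_{i,j,k,l} (h i j k l + h j k l i + h k l i j + h l i j k)^2 = (1/4) * ∑_{i,j,k,l} (h i j k l)^2 + (3/4) * ∑_{i,j,k,l} (h i j k l) * (h i j l k). -/

import Mathlib

theorem stmt_0 (n : ℕ) (h : Fin n → Fin n → Fin n → Fin n → ℝ)
    (hsym : ∀ (σ : Equiv.Perm (Fin 3)) (v : Fin 3 → Fin n) (l : Fin n),
      h (v (σ 0)) (v (σ 1)) (v (σ 2)) l = h (v 0) (v 1) (v 2) l) :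
    (1/16 : ℝ) * ∑ i, ∑ j, ∑ k, ∑ l,
        (h i j k l + h j k l i + h k l i j + h l i j k)^2
      = (1/4) * ∑ i, ∑ j, ∑ k, ∑ l, (h i j k l)^2
        + (3/4) * ∑ i, ∑ j, ∑ k, ∑ l, h i j k l * h i j l k := by
  have p12 : ∀ i j k l, h i j k l = h j i k l := fun i j k l => by
    have := hsym (Equiv.swap 0 1) ![i,j,k] l
    simpa [show (Equiv.swap (0 : Fin 3) 1) 2 = 2 by decide] using this.symm
  have p23 : ∀ i j k l, h i j k l = h i k j l := fun i j k l => by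
    have := hsym (Equiv.swap 1 2) ![i,j,k] l
    simpa [show (Equiv.swap (1 : Fin 3) 2) 0 = 0 by decide] using this.symm
  have cyc : ∀ i j k l, h i j k l = h j k i l := fun i j k l =>
    (p12 i j k l).trans (p23 j i k l)
  -- switch to sums over the product type
  have conv4 : ∀ f : Fin n → Fin n → Fin n → Fin n → ℝ,
      (∑ i, ∑ j, ∑ k, ∑ l, f i j k l)
        = ∑ p : Fin n × Fin n × Fin n × Fin n, f p.1 p.2.1 p.2.2.1 p.2.2.2 := by
    intro f
    rw [Fintype.sum_prod_type]
    refine Finset.sum_congr rfl fun i _ => ?_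
    rw [Fintype.sum_prod_type]
    refine Finset.sum_congr rfl fun j _ => ?_
    rw [Fintype.sum_prod_type]
  rw [conv4, conv4, conv4]
  set T : ℝ := ∑ p : Fin n × Fin n × Fin n × Fin n,
      h p.1 p.2.1 p.2.2.1 p.2.2.2 * h p.1 p.2.1 p.2.2.2 p.2.2.1 with hT
  set S : ℝ := ∑ p : Fin n × Fin n × Fin n × Fin n,
      (h p.1 p.2.1 p.2.2.1 p.2.2.2)^2 with hS
  -- square reindexings
  have SB : (∑ p : Fin n × Fin n × Fin n × Fin n,
      (h p.2.1 p.2.2.1 p.2.2.2 p.1)^2) = S := by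
    rw [hS]
    exact Fintype.sum_equiv
      ⟨fun p => (p.2.1, p.2.2.1, p.2.2.2, p.1),
       fun p => (p.2.2.2, p.1, p.2.1, p.2.2.1), fun _ => rfl, fun _ => rfl⟩
      _ _ (fun p => rfl)
  have SC : (∑ p : Fin n × Fin n × Fin n × Fin n,
      (h p.2.2.1 p.2.2.2 p.1 p.2.1)^2) = S := by
    rw [hS]
    exact Fintype.sum_equiv
      ⟨fun p => (p.2.2.1, p.2.2.2, p.1, p.2.1),
       fun p => (p.2.2.1, p.2.2.2, p.1, p.2.1), fun _ => rfl, fun _ => rfl⟩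
      _ _ (fun p => rfl)
  have SD : (∑ p : Fin n × Fin n × Fin n × Fin n,
      (h p.2.2.2 p.1 p.2.1 p.2.2.1)^2) = S := by
    rw [hS]
    exact Fintype.sum_equiv
      ⟨fun p => (p.2.2.2, p.1, p.2.1, p.2.2.1),
       fun p => (p.2.1, p.2.2.1, p.2.2.2, p.1), fun _ => rfl, fun _ => rfl⟩
      _ _ (fun p => rfl)
  -- cross terms
  have TAB : (∑ p : Fin n × Fin n × Fin n × Fin n,
      h p.1 p.2.1 p.2.2.1 p.2.2.2 * h p.2.1 p.2.2.1 p.2.2.2 p.1) = T := by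
    rw [hT]
    exact Fintype.sum_equiv
      ⟨fun p => (p.2.1, p.2.2.1, p.2.2.2, p.1),
       fun p => (p.2.2.2, p.1, p.2.1, p.2.2.1), fun _ => rfl, fun _ => rfl⟩
      _ _ (fun p => by
        show h p.1 p.2.1 p.2.2.1 p.2.2.2 * h p.2.1 p.2.2.1 p.2.2.2 p.1
           = h p.2.1 p.2.2.1 p.2.2.2 p.1 * h p.2.1 p.2.2.1 p.1 p.2.2.2
        rw [cyc p.1 p.2.1 p.2.2.1]; ring)
  have TAC : (∑ p : Fin n × Fin n × Fin n × Fin n,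
      h p.1 p.2.1 p.2.2.1 p.2.2.2 * h p.2.2.1 p.2.2.2 p.1 p.2.1) = T := by
    rw [hT]
    exact Fintype.sum_equiv
      ⟨fun p => (p.1, p.2.2.1, p.2.1, p.2.2.2),
       fun p => (p.1, p.2.2.1, p.2.1, p.2.2.2), fun _ => rfl, fun _ => rfl⟩
      _ _ (fun p => by
        show h p.1 p.2.1 p.2.2.1 p.2.2.2 * h p.2.2.1 p.2.2.2 p.1 p.2.1
           = h p.1 p.2.2.1 p.2.1 p.2.2.2 * h p.1 p.2.2.1 p.2.2.2 p.2.1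
        rw [p23 p.1 p.2.1 p.2.2.1, cyc p.2.2.1 p.2.2.2 p.1, cyc p.2.2.2 p.1 p.2.2.1])
  have TAD : (∑ p : Fin n × Fin n × Fin n × Fin n,
      h p.1 p.2.1 p.2.2.1 p.2.2.2 * h p.2.2.2 p.1 p.2.1 p.2.2.1) = T := by
    rw [hT]
    refine Finset.sum_congr rfl fun p _ => ?_
    rw [cyc p.2.2.2 p.1 p.2.1]
  have TBC : (∑ p : Fin n × Fin n × Fin n × Fin n,
      h p.2.1 p.2.2.1 p.2.2.2 p.1 * h p.2.2.1 p.2.2.2 p.1 p.2.1) = T := by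
    rw [hT]
    exact Fintype.sum_equiv
      ⟨fun p => (p.2.2.1, p.2.2.2, p.2.1, p.1),
       fun p => (p.2.2.2, p.2.2.1, p.1, p.2.1), fun _ => rfl, fun _ => rfl⟩
      _ _ (fun p => by
        show h p.2.1 p.2.2.1 p.2.2.2 p.1 * h p.2.2.1 p.2.2.2 p.1 p.2.1
           = h p.2.2.1 p.2.2.2 p.2.1 p.1 * h p.2.2.1 p.2.2.2 p.1 p.2.1
        rw [cyc p.2.1 p.2.2.1 p.2.2.2])
  have TBD : (∑ p : Fin n × Fin n × Fin n × Fin n,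
      h p.2.1 p.2.2.1 p.2.2.2 p.1 * h p.2.2.2 p.1 p.2.1 p.2.2.1) = T := by
    rw [hT]
    exact Fintype.sum_equiv
      ⟨fun p => (p.2.1, p.2.2.2, p.2.2.1, p.1),
       fun p => (p.2.2.2, p.1, p.2.2.1, p.2.1), fun _ => rfl, fun _ => rfl⟩
      _ _ (fun p => by
        show h p.2.1 p.2.2.1 p.2.2.2 p.1 * h p.2.2.2 p.1 p.2.1 p.2.2.1
           = h p.2.1 p.2.2.2 p.2.2.1 p.1 * h p.2.1 p.2.2.2 p.1 p.2.2.1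
        rw [p23 p.2.1 p.2.2.1 p.2.2.2, cyc p.2.2.2 p.1 p.2.1, cyc p.1 p.2.1 p.2.2.2])
  have TCD : (∑ p : Fin n × Fin n × Fin n × Fin n,
      h p.2.2.1 p.2.2.2 p.1 p.2.1 * h p.2.2.2 p.1 p.2.1 p.2.2.1) = T := by
    rw [hT]
    exact Fintype.sum_equiv
      ⟨fun p => (p.2.2.2, p.1, p.2.2.1, p.2.1),
       fun p => (p.2.1, p.2.2.2, p.2.2.1, p.1), fun _ => rfl, fun _ => rfl⟩
      _ _ (fun p => by
        show h p.2.2.1 p.2.2.2 p.1 p.2.1 * h p.2.2.2 p.1 p.2.1 p.2.2.1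
           = h p.2.2.2 p.1 p.2.2.1 p.2.1 * h p.2.2.2 p.1 p.2.1 p.2.2.1
        rw [cyc p.2.2.1 p.2.2.2 p.1])
  have big : (∑ p : Fin n × Fin n × Fin n × Fin n,
      (h p.1 p.2.1 p.2.2.1 p.2.2.2 + h p.2.1 p.2.2.1 p.2.2.2 p.1
        + h p.2.2.1 p.2.2.2 p.1 p.2.1 + h p.2.2.2 p.1 p.2.1 p.2.2.1)^2)
      = 4 * S + 12 * T := by
    calc (∑ p : Fin n × Fin n × Fin n × Fin n,
        (h p.1 p.2.1 p.2.2.1 p.2.2.2 + h p.2.1 p.2.2.1 p.2.2.2 p.1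
          + h p.2.2.1 p.2.2.2 p.1 p.2.1 + h p.2.2.2 p.1 p.2.1 p.2.2.1)^2)
        = ∑ p : Fin n × Fin n × Fin n × Fin n,
          ((h p.1 p.2.1 p.2.2.1 p.2.2.2)^2 + (h p.2.1 p.2.2.1 p.2.2.2 p.1)^2
            + (h p.2.2.1 p.2.2.2 p.1 p.2.1)^2 + (h p.2.2.2 p.1 p.2.1 p.2.2.1)^2
            + 2 * (h p.1 p.2.1 p.2.2.1 p.2.2.2 * h p.2.1 p.2.2.1 p.2.2.2 p.1)
            + 2 * (h p.1 p.2.1 p.2.2.1 p.2.2.2 * h p.2.2.1 p.2.2.2 p.1 p.2.1)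
            + 2 * (h p.1 p.2.1 p.2.2.1 p.2.2.2 * h p.2.2.2 p.1 p.2.1 p.2.2.1)
            + 2 * (h p.2.1 p.2.2.1 p.2.2.2 p.1 * h p.2.2.1 p.2.2.2 p.1 p.2.1)
            + 2 * (h p.2.1 p.2.2.1 p.2.2.2 p.1 * h p.2.2.2 p.1 p.2.1 p.2.2.1)
            + 2 * (h p.2.2.1 p.2.2.2 p.1 p.2.1 * h p.2.2.2 p.1 p.2.1 p.2.2.1)) :=
          Finset.sum_congr rfl fun p _ => by ring
      _ = 4 * S + 12 * T := by
          simp only [Finset.sum_add_distrib, ← Finset.mul_sum]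
          rw [SB, SC, SD, TAB, TAC, TAD, TBC, TBD, TCD, ← hS]
          ring
  rw [big]
  ring
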